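/- Bound on k for additive MDS codes: if there is an additive code C over F_{q^h} of length n ≥ k + 2, F_q-dimension kh (k ∈ ℕ), and minimum distance d = n - k + 1 (MDS), then k ≤ q^h - 1. -/

import Mathlib

/-- Bound on `k` for additive MDS codes: if there is an additive code over `F_{q^h}` of length
`n ≥ k + 2`, `F_q`-dimension `kh`, and minimum distance `d = n - k + 1` (MDS), then
`k ≤ q^h - 1`. -/
theorem additive_MDS_k_bound
    (q h n k d : ℕ) (Fq K : Type) [Field Fq] [Fintype Fq] [Field K] [Fintype K]
    [DecidableEq K] [Algebra Fq K]
    (hq : Fintype.card Fq = q) (hK : Fintype.card K = q ^ h)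
    (C : Submodule Fq (Fin n → K)) (hrk : Module.finrank Fq C = k * h)
    (hd1 : ∀ u ∈ C, u ≠ 0 → d ≤ hammingNorm u)
    (hd2 : ∃ u ∈ C, u ≠ 0 ∧ hammingNorm u = d)
    (hMDS : d + k = n + 1) (hn : k + 2 ≤ n) :
    k ≤ q ^ h - 1 := by
  classical
  rcases Nat.eq_zero_or_pos k with hk0 | hk1
  · omega
  have hkle : k ≤ n := by omega
  have hQ2 : 2 ≤ q ^ h := by rw [← hK]; exact Fintype.one_lt_card
  -- key vanishing lemma: a codeword vanishing on k coordinates is zero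
  have key : ∀ u ∈ C, ∀ Z : Finset (Fin n), k ≤ Z.card → (∀ t ∈ Z, u t = 0) → u = 0 := by
    intro u hu Z hZc hZ
    by_contra hne
    have h1 : d ≤ hammingNorm u := hd1 u hu hne
    have h2 : hammingNorm u ≤ n - k := by
      have hsub : Finset.univ.filter (fun t => u t ≠ 0) ⊆ Finset.univ \ Z := by
        intro t ht
        simp only [Finset.mem_filter, Finset.mem_univ, true_and] at ht
        simp only [Finset.mem_sdiff, Finset.mem_univ, true_and]
        exact fun htZ => ht (hZ t htZ)
      calc hammingNorm u = (Finset.univ.filter (fun t => u t ≠ 0)).card := rfl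
        _ ≤ (Finset.univ \ Z).card := Finset.card_le_card hsub
        _ = n - Z.card := by
            rw [Finset.card_sdiff_of_subset (Finset.subset_univ _), Finset.card_univ, Fintype.card_fin]
        _ ≤ n - k := Nat.sub_le_sub_left hZc n
    omega
  -- projection onto the first k coordinates
  letI : Fintype C := Fintype.ofFinite C
  set p : (Fin n → K) →ₗ[Fq] (Fin k → K) := LinearMap.funLeft Fq K (Fin.castLE hkle) with hp
  have pinj : Function.Injective (p.comp C.subtype) := by
    intro u v huv
    have hsubC : ((u : Fin n → K) - v) ∈ C := sub_mem u.2 v.2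
    have hz : ((u : Fin n → K) - v) = 0 := by
      apply key _ hsubC (Finset.image (Fin.castLE hkle) Finset.univ)
      · rw [Finset.card_image_of_injective _ (Fin.castLE_injective _)]
        simp
      · intro t ht
        simp only [Finset.mem_image, Finset.mem_univ, true_and] at ht
        obtain ⟨m, rfl⟩ := ht
        have := congrFun huv m
        simpa [hp, LinearMap.funLeft_apply, sub_eq_zero] using this
    exact Subtype.ext (sub_eq_zero.mp hz)
  have cardC : Fintype.card C = q ^ (k * h) := by
    rw [Module.card_eq_pow_finrank (K := Fq) (V := C), hq, hrk]
  have cardP : Fintype.card (Fin k → K) = q ^ (k * h) := by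
    rw [Fintype.card_fun, hK, Fintype.card_fin, ← pow_mul, mul_comm h k]
  have pbij : Function.Bijective (p.comp C.subtype) := by
    rw [Fintype.bijective_iff_injective_and_card]
    exact ⟨pinj, by rw [cardC, cardP]⟩
  set e : C ≃ₗ[Fq] (Fin k → K) := LinearEquiv.ofBijective (p.comp C.subtype) pbij with he
  have hproj : ∀ (x : Fin k → K) (m : Fin k),
      (e.symm x : Fin n → K) (Fin.castLE hkle m) = x m := by
    intro x m
    have hx : p ((e.symm x : C) : Fin n → K) = x := e.apply_symm_apply x
    simpa [hp, LinearMap.funLeft_apply] using congrFun hx m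
  -- the two extra coordinates
  set a : Fin n := ⟨k, by omega⟩ with ha'
  set b : Fin n := ⟨k + 1, by omega⟩ with hb'
  have hab : a ≠ b := by simp [ha', hb', Fin.ext_iff]
  have hcastne : ∀ (m : Fin k) (t : Fin n), t = a ∨ t = b → Fin.castLE hkle m ≠ t := by
    rintro m t (rfl | rfl) hc <;>
      · have := congrArg Fin.val hc
        simp only [Fin.coe_castLE, ha', hb', Fin.val_mk] at this
        omega
  -- nonzero singles give nonzero codewords at positions a and b
  have nonzero : ∀ (i : Fin k) (c : K), c ≠ 0 → ∀ t : Fin n, t = a ∨ t = b →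
      (e.symm (Pi.single i c) : Fin n → K) t ≠ 0 := by
    intro i c hc t ht hzero
    set u : C := e.symm (Pi.single i c) with hu
    have hZ : (u : Fin n → K) = 0 := by
      apply key _ u.2 (insert t (Finset.image (Fin.castLE hkle) (Finset.univ \ {i})))
      · rw [Finset.card_insert_of_notMem, Finset.card_image_of_injective _
          (Fin.castLE_injective _), Finset.card_sdiff_of_subset (by simp), Finset.card_univ,
          Fintype.card_fin, Finset.card_singleton]
        · omega
        · simp only [Finset.mem_image]
          rintro ⟨m, -, hm⟩
          exact hcastne m t ht hm
      · intro s hs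
        rcases Finset.mem_insert.mp hs with rfl | hs
        · exact hzero
        · simp only [Finset.mem_image, Finset.mem_sdiff, Finset.mem_univ, true_and,
            Finset.mem_singleton] at hs
          obtain ⟨m, hmi, rfl⟩ := hs
          rw [hproj, Pi.single_eq_of_ne hmi]
    have hu0 : u = 0 := Subtype.ext hZ
    have : (Pi.single i c : Fin k → K) = 0 := by
      rw [← e.apply_symm_apply (Pi.single i c), ← hu, hu0, LinearEquiv.map_zero]
    exact hc (by simpa using congrFun this i)
  -- injective map (i, c) ↦ (value at a, value at b)
  set F : Fin k × {c : K // c ≠ 0} → {y : K // y ≠ 0} × {y : K // y ≠ 0} :=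
    fun ic => ⟨⟨(e.symm (Pi.single ic.1 ic.2.1) : Fin n → K) a,
                nonzero ic.1 ic.2.1 ic.2.2 a (Or.inl rfl)⟩,
               ⟨(e.symm (Pi.single ic.1 ic.2.1) : Fin n → K) b,
                nonzero ic.1 ic.2.1 ic.2.2 b (Or.inr rfl)⟩⟩ with hF
  have Finj : Function.Injective F := by
    rintro ⟨i, c, hc⟩ ⟨j, c', hc'⟩ hFeq
    have hva : (e.symm (Pi.single i c) : Fin n → K) a
        = (e.symm (Pi.single j c') : Fin n → K) a :=
      congrArg (fun z => (z.1 : K)) hFeq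
    have hvb : (e.symm (Pi.single i c) : Fin n → K) b
        = (e.symm (Pi.single j c') : Fin n → K) b :=
      congrArg (fun z => (z.2 : K)) hFeq
    set u : C := e.symm (Pi.single i c) - e.symm (Pi.single j c') with hu
    have huval : (u : Fin n → K)
        = (e.symm (Pi.single i c) : Fin n → K) - (e.symm (Pi.single j c') : Fin n → K) := rfl
    have hZ : (u : Fin n → K) = 0 := by
      apply key _ u.2 (insert a (insert b (Finset.image (Fin.castLE hkle)
        (Finset.univ \ {i, j}))))
      · have hbni : b ∉ Finset.image (Fin.castLE hkle) (Finset.univ \ {i, j}) := by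
          simp only [Finset.mem_image]
          rintro ⟨m, -, hm⟩
          exact hcastne m b (Or.inr rfl) hm
        have hani : a ∉ insert b (Finset.image (Fin.castLE hkle) (Finset.univ \ {i, j})) := by
          simp only [Finset.mem_insert]
          rintro (h | h)
          · exact hab h
          · simp only [Finset.mem_image] at h
            obtain ⟨m, -, hm⟩ := h
            exact hcastne m a (Or.inl rfl) hm
        rw [Finset.card_insert_of_notMem hani, Finset.card_insert_of_notMem hbni,
          Finset.card_image_of_injective _ (Fin.castLE_injective _),
          Finset.card_sdiff_of_subset (by simp), Finset.card_univ, Fintype.card_fin]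
        have : ({i, j} : Finset (Fin k)).card ≤ 2 :=
          le_trans (Finset.card_insert_le _ _) (by simp)
        omega
      · intro s hs
        simp only [Finset.mem_insert] at hs
        rcases hs with rfl | rfl | hs
        · rw [huval, Pi.sub_apply, hva, sub_self]
        · rw [huval, Pi.sub_apply, hvb, sub_self]
        · simp only [Finset.mem_image, Finset.mem_sdiff, Finset.mem_univ, true_and,
            Finset.mem_insert, Finset.mem_singleton, not_or] at hs
          obtain ⟨m, ⟨hmi, hmj⟩, rfl⟩ := hs
          rw [huval, Pi.sub_apply, hproj, hproj, Pi.single_eq_of_ne hmi,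
            Pi.single_eq_of_ne hmj, sub_self]
    have hu0 : u = 0 := Subtype.ext hZ
    have hsingle : (Pi.single i c : Fin k → K) = Pi.single j c' := by
      have : e.symm (Pi.single i c) = e.symm (Pi.single j c') := by
        have := sub_eq_zero.mp (hu ▸ hu0 : e.symm (Pi.single i c) - e.symm (Pi.single j c') = 0)
        exact this
      simpa using congrArg e this
    have hij : i = j := by
      by_contra hij
      have := congrFun hsingle i
      rw [Pi.single_eq_same, Pi.single_eq_of_ne hij] at this
      exact hc this
    subst hij
    have hcc : c = c' := by
      have := congrFun hsingle i
      rwa [Pi.single_eq_same, Pi.single_eq_same] at this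
    simp [hcc]
  -- counting
  have hcard := Fintype.card_le_of_injective F Finj
  have cardNZ : Fintype.card {y : K // y ≠ 0} = q ^ h - 1 := by
    have : Fintype.card {y : K // y ≠ 0} = Fintype.card K - Fintype.card {y : K // y = 0} :=
      Fintype.card_subtype_compl _
    rw [this, Fintype.card_subtype_eq, hK]
  rw [Fintype.card_prod, Fintype.card_prod, Fintype.card_fin, cardNZ] at hcard
  have hpos : 0 < q ^ h - 1 := by omega
  exact Nat.le_of_mul_le_mul_right hcard hpos
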